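/- Let K be a number field of degree D over ℚ and let α ∈ K be a periodic point of f(x) = x² - 2 with minimal period n. Then n divides D; in particular f^[D](α) = α. -/

import Mathlib

open Function Polynomial IntermediateField
set_option synthInstance.maxHeartbeats 1000000
set_option maxHeartbeats 1000000

lemma iter_map {F L : Type*} [Field F] [Field L] (φ : F →+* L) (j : ℕ) (x : F) :
    (fun y : L => y ^ 2 - 2)^[j] (φ x) = φ ((fun y : F => y ^ 2 - 2)^[j] x) := by
  induction j generalizing x with
  | zero => simp
  | succ j ih =>
    rw [Function.iterate_succ_apply, Function.iterate_succ_apply, ← ih]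
    simp only [map_sub, map_pow, map_ofNat]

lemma iter_formula {F : Type*} [Field F] (ζ : F) (hζ : ζ ≠ 0) (j : ℕ) :
    (fun y : F => y ^ 2 - 2)^[j] (ζ + ζ⁻¹) = ζ ^ (2 ^ j) + (ζ ^ (2 ^ j))⁻¹ := by
  induction j with
  | zero => simp
  | succ j ih =>
    rw [Function.iterate_succ_apply', ih]
    have h : ζ ^ 2 ^ j ≠ 0 := pow_ne_zero _ hζ
    have h2 : ζ ^ 2 ^ (j + 1) = (ζ ^ 2 ^ j) ^ 2 := by
      rw [← pow_mul, ← pow_succ]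
    rw [h2]
    field_simp
    ring

lemma sum_inv_inj {F : Type*} [Field F] {x y : F} (hx : x ≠ 0) (hy : y ≠ 0)
    (h : x + x⁻¹ = y + y⁻¹) : x = y ∨ x * y = 1 := by
  have h2 : (x - y) * (x * y - 1) = 0 := by
    field_simp at h
    linear_combination h
  rcases mul_eq_zero.mp h2 with h3 | h3
  · exact Or.inl (sub_eq_zero.mp h3)
  · exact Or.inr (by linear_combination h3)

lemma pow_shift {F : Type*} [Field F] (ζ : F) (hζ : ζ ≠ 0) (k : ℕ) (hk : 1 ≤ k) :
    ζ ^ k = ζ ↔ ζ ^ (k - 1) = 1 := by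
  have hk1 : k - 1 + 1 = k := by omega
  constructor
  · intro h
    have h1 : ζ ^ (k - 1) * ζ = 1 * ζ := by
      rw [one_mul, ← pow_succ, hk1]
      exact h
    exact mul_right_cancel₀ hζ h1
  · intro h
    have h1 : ζ ^ k = ζ ^ (k - 1) * ζ := by rw [← pow_succ, hk1]
    rw [h1, h, one_mul]

theorem minimal_period_dvd_degree (K : Type*) [Field K] [NumberField K]
    (α : K) (n : ℕ) (hn : 1 ≤ n)
    (hper : (fun y : K => y ^ 2 - 2)^[n] α = α)
    (hmin : ∀ m : ℕ, 1 ≤ m → (fun y : K => y ^ 2 - 2)^[m] α = α → n ≤ m) :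
    n ∣ Module.finrank ℚ K ∧
      (fun y : K => y ^ 2 - 2)^[Module.finrank ℚ K] α = α := by
  suffices hdvd : n ∣ Module.finrank ℚ K by
    refine ⟨hdvd, ?_⟩
    obtain ⟨k, hk⟩ := hdvd
    rw [hk, Function.iterate_mul]
    exact Function.iterate_fixed hper k
  set Ω := AlgebraicClosure K
  set a : Ω := algebraMap K Ω α with ha_def
  -- find ζ with ζ^2 - aζ + 1 = 0
  obtain ⟨ζ, hζroot⟩ : ∃ ζ : Ω, ζ ^ 2 - a * ζ + 1 = 0 := by
    obtain ⟨ζ, hζ⟩ := IsAlgClosed.exists_root (X ^ 2 - C a * X + 1 : Polynomial Ω) (by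
      have hdeg : (X ^ 2 - C a * X + 1 : Polynomial Ω).degree = 2 := by
        compute_degree!
      rw [hdeg]; exact two_ne_zero)
    refine ⟨ζ, ?_⟩
    have := hζ
    simp only [IsRoot.def, eval_add, eval_sub, eval_pow, eval_mul, eval_C, eval_X,
      eval_one] at this
    exact this
  have hζ0 : ζ ≠ 0 := by
    rintro rfl
    simp at hζroot
  have ha : a = ζ + ζ⁻¹ := by
    linear_combination (-ζ⁻¹) * hζroot + (ζ - a) * mul_inv_cancel₀ hζ0
  have hinj : Function.Injective (algebraMap K Ω) := (algebraMap K Ω).injective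
  -- key equivalence between iteration fixedness and root-of-unity conditions
  have key : ∀ j : ℕ, ((fun y : K => y ^ 2 - 2)^[j] α = α ↔
      (ζ ^ (2 ^ j) = ζ ∨ ζ ^ (2 ^ j + 1) = 1)) := by
    intro j
    have hx : ζ ^ 2 ^ j ≠ 0 := pow_ne_zero _ hζ0
    constructor
    · intro h
      have h2 : (fun y : Ω => y ^ 2 - 2)^[j] a = a := by
        rw [ha_def, iter_map (algebraMap K Ω) j α, h]
      rw [ha, iter_formula ζ hζ0 j] at h2
      rcases sum_inv_inj hx hζ0 h2 with h3 | h3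
      · exact Or.inl h3
      · right; rw [pow_succ]; exact h3
    · intro h
      have h2 : (fun y : Ω => y ^ 2 - 2)^[j] a = a := by
        rw [ha, iter_formula ζ hζ0 j]
        rcases h with h3 | h3
        · rw [h3]
        · have hinv : ζ ^ 2 ^ j = ζ⁻¹ := by
            apply eq_inv_of_mul_eq_one_left
            rw [← pow_succ]
            exact h3
          rw [hinv, inv_inv, add_comm]
      apply hinj
      rw [← iter_map (algebraMap K Ω) j α]
      exact h2
  -- ζ has finite order
  have hper2 := (key n).mp hper
  have htwo : 2 ≤ 2 ^ n := by
    calc 2 = 2 ^ 1 := by norm_num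
      _ ≤ 2 ^ n := Nat.pow_le_pow_right (by norm_num) hn
  have hfin : IsOfFinOrder ζ := by
    rcases hper2 with h | h
    · exact isOfFinOrder_iff_pow_eq_one.mpr
        ⟨2 ^ n - 1, by omega, ((pow_shift ζ hζ0 _ (by omega)).mp h)⟩
    · exact isOfFinOrder_iff_pow_eq_one.mpr ⟨2 ^ n + 1, by omega, h⟩
  set m := orderOf ζ with hm_def
  have hm1 : 0 < m := hfin.orderOf_pos
  -- m is odd
  have hmodd : ¬ 2 ∣ m := by
    intro h2m
    have he : 2 ∣ 2 ^ n := dvd_pow_self 2 (by omega : n ≠ 0)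
    rcases hper2 with h | h
    · have hdvd : m ∣ 2 ^ n - 1 :=
        orderOf_dvd_of_pow_eq_one ((pow_shift ζ hζ0 _ (by omega)).mp h)
      have := h2m.trans hdvd
      omega
    · have hdvd : m ∣ 2 ^ n + 1 := orderOf_dvd_of_pow_eq_one h
      have := h2m.trans hdvd
      omega
  -- case m = 1
  rcases eq_or_lt_of_le (show 1 ≤ m from hm1) with hm1' | hm2
  · have hζ1 : ζ = 1 := orderOf_eq_one_iff.mp hm1'.symm
    have h1 : (fun y : K => y ^ 2 - 2)^[1] α = α := by
      rw [key 1, hζ1]; left; simp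
    have := hmin 1 le_rfl h1
    interval_cases n
    exact one_dvd _
  have hm3 : 3 ≤ m := by omega
  haveI : NeZero m := ⟨by omega⟩
  haveI : Fact (2 < m) := ⟨by omega⟩
  -- group theory in (ZMod m)ˣ
  have hcop : Nat.Coprime 2 m := (Nat.Prime.coprime_iff_not_dvd Nat.prime_two).mpr hmodd
  set u : (ZMod m)ˣ := ZMod.unitOfCoprime 2 hcop with hu_def
  have hcoe : ∀ j : ℕ, ((u ^ j : (ZMod m)ˣ) : ZMod m) = ((2 ^ j : ℕ) : ZMod m) := by
    intro j
    rw [Units.val_pow_eq_pow_val, hu_def, ZMod.coe_unitOfCoprime]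
    push_cast
    ring
  set N : Subgroup (ZMod m)ˣ := Subgroup.zpowers (-1 : (ZMod m)ˣ) with hN_def
  have hNmem : ∀ x : (ZMod m)ˣ, x ∈ N ↔ x = 1 ∨ x = -1 := by
    intro x
    constructor
    · rintro ⟨k, hk⟩
      rcases Int.even_or_odd k with ⟨c, hc⟩ | ⟨c, hc⟩
      · left
        rw [← hk, hc]
        show (-1 : (ZMod m)ˣ) ^ (c + c) = 1
        rw [show (c + c : ℤ) = 2 * c by ring, zpow_mul,
          show ((2:ℤ)) = ((2:ℕ):ℤ) by norm_num, zpow_natCast, neg_one_sq, one_zpow]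
      · right
        rw [← hk, hc]
        show (-1 : (ZMod m)ˣ) ^ (2 * c + 1) = -1
        rw [zpow_add, zpow_mul, show ((2:ℤ)) = ((2:ℕ):ℤ) by norm_num, zpow_natCast,
          neg_one_sq, one_zpow, one_mul, zpow_one]
    · rintro (rfl | rfl)
      · exact one_mem N
      · exact Subgroup.mem_zpowers _
  have h1iff : ∀ j : ℕ, (u ^ j = 1 ↔ ζ ^ (2 ^ j) = ζ) := by
    intro j
    have e1 : (u ^ j = 1) ↔ (2 ^ j : ℕ) ≡ 1 [MOD m] := by
      rw [Units.ext_iff, hcoe j,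
        show ((1 : (ZMod m)ˣ) : ZMod m) = ((1 : ℕ) : ZMod m) by simp]
      exact ZMod.natCast_eq_natCast_iff _ _ _
    have e2 : ((2 ^ j : ℕ) ≡ 1 [MOD m]) ↔ m ∣ 2 ^ j - 1 :=
      ⟨fun h => (Nat.modEq_iff_dvd' Nat.one_le_two_pow).mp h.symm,
       fun h => ((Nat.modEq_iff_dvd' Nat.one_le_two_pow).mpr h).symm⟩
    have e3 : (m ∣ 2 ^ j - 1) ↔ ζ ^ (2 ^ j - 1) = 1 := orderOf_dvd_iff_pow_eq_one
    rw [e1, e2, e3, ← pow_shift ζ hζ0 _ Nat.one_le_two_pow]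
  have h2iff : ∀ j : ℕ, (u ^ j = -1 ↔ ζ ^ (2 ^ j + 1) = 1) := by
    intro j
    have e1 : (u ^ j = -1) ↔ ((2 ^ j + 1 : ℕ) : ZMod m) = 0 := by
      rw [Units.ext_iff, hcoe j, Units.val_neg, Units.val_one]
      push_cast
      constructor
      · intro h; rw [h]; ring
      · intro h; linear_combination h
    have e2 : (((2 ^ j + 1 : ℕ) : ZMod m) = 0) ↔ m ∣ 2 ^ j + 1 :=
      ZMod.natCast_eq_zero_iff _ _
    rw [e1, e2]
    exact orderOf_dvd_iff_pow_eq_one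
  have hukey : ∀ j : ℕ, (u ^ j ∈ N ↔ (fun y : K => y ^ 2 - 2)^[j] α = α) := by
    intro j
    rw [hNmem, key j, h1iff j, h2iff j]
  -- order of image of u in quotient is n
  have horder : orderOf ((QuotientGroup.mk u : (ZMod m)ˣ ⧸ N)) = n := by
    rw [orderOf_eq_iff (by omega : 0 < n)]
    constructor
    · rw [← QuotientGroup.mk_pow, QuotientGroup.eq_one_iff]
      exact (hukey n).mpr hper
    · intro j hjn hj0 hcon
      rw [← QuotientGroup.mk_pow, QuotientGroup.eq_one_iff] at hcon
      have := hmin j hj0 ((hukey j).mp hcon)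
      omega
  have hcardN : Nat.card N = 2 := by
    rw [hN_def, Nat.card_zpowers]
    apply orderOf_eq_prime
    · exact neg_one_sq
    · intro h
      have h2 : ((-1 : (ZMod m)ˣ) : ZMod m) = ((1 : (ZMod m)ˣ) : ZMod m) := by rw [h]
      simp only [Units.val_neg, Units.val_one] at h2
      exact ZMod.neg_one_ne_one h2
  have hcardG : Nat.card (ZMod m)ˣ = Nat.totient m := by
    rw [Nat.card_eq_fintype_card, ZMod.card_units_eq_totient]
  have hquot : Nat.card ((ZMod m)ˣ ⧸ N) * 2 = Nat.totient m := by
    rw [← hcardN, ← Subgroup.card_eq_card_quotient_mul_card_subgroup, hcardG]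
  have hn_dvd : n ∣ Nat.card ((ZMod m)ˣ ⧸ N) := horder ▸ orderOf_dvd_natCard _
  have h2n_tot : 2 * n ∣ Nat.totient m := by
    rw [← hquot]
    obtain ⟨c, hc⟩ := hn_dvd
    exact ⟨c, by rw [hc]; ring⟩
  -- field theory: totient m ∣ 2 * D
  have hpmon : (X ^ 2 - (C α * X - 1) : Polynomial K).Monic := by
    apply monic_X_pow_sub
    apply lt_of_le_of_lt (degree_sub_le _ _)
    rw [max_lt_iff]
    constructor
    · calc (C α * X : Polynomial K).degree ≤ 1 := degree_C_mul_X_le α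
        _ < 2 := by norm_num
    · calc (1 : Polynomial K).degree ≤ 0 := degree_one_le
        _ < 2 := by norm_num
  have hint : IsIntegral K ζ := by
    refine ⟨X ^ 2 - (C α * X - 1), hpmon, ?_⟩
    simp only [eval₂_sub, eval₂_pow, eval₂_X, eval₂_mul, eval₂_C, eval₂_one]
    rw [← ha_def]
    linear_combination hζroot
  haveI : FiniteDimensional K K⟮ζ⟯ := IntermediateField.adjoin.finiteDimensional hint
  haveI : IsScalarTower ℚ (↥K⟮ζ⟯) Ω := by
    constructor
    intro q x z
    show ((q • x : ↥K⟮ζ⟯) : Ω) * z = q • (↑x * z)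
    rw [Rat.smul_def, Rat.smul_def]
    push_cast
    ring
  haveI : FiniteDimensional ℚ K⟮ζ⟯ := FiniteDimensional.trans ℚ K K⟮ζ⟯
  have htower : Module.finrank ℚ K * Module.finrank K K⟮ζ⟯ = Module.finrank ℚ K⟮ζ⟯ :=
    Module.finrank_mul_finrank ℚ K K⟮ζ⟯
  have he2 : Module.finrank K K⟮ζ⟯ ∣ 2 := by
    rw [IntermediateField.adjoin.finrank hint]
    have hdvd : minpoly K ζ ∣ X ^ 2 - (C α * X - 1) := by
      apply minpoly.dvd
      simp only [map_sub, map_pow, map_mul, map_one, aeval_X, aeval_C]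
      rw [← ha_def]
      linear_combination hζroot
    have hd2 : (minpoly K ζ).natDegree ≤ 2 := by
      calc (minpoly K ζ).natDegree ≤ (X ^ 2 - (C α * X - 1) : Polynomial K).natDegree :=
            natDegree_le_of_dvd hdvd hpmon.ne_zero
        _ ≤ 2 := natDegree_le_iff_degree_le.mpr (by
            apply le_trans (degree_sub_le _ _)
            rw [max_le_iff]
            constructor
            · simp
            · calc (C α * X - 1 : Polynomial K).degree ≤
                  max (C α * X : Polynomial K).degree (1 : Polynomial K).degree :=
                    degree_sub_le _ _
                _ ≤ 2 := by
                  rw [max_le_iff]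
                  exact ⟨le_trans (degree_C_mul_X_le α) (by norm_num),
                    le_trans degree_one_le (by norm_num)⟩)
    have hd1 : 0 < (minpoly K ζ).natDegree := minpoly.natDegree_pos hint
    interval_cases h : (minpoly K ζ).natDegree
    · exact one_dvd 2
    · exact dvd_refl 2
  -- degree of minpoly ℚ ζ = totient m
  have hprim : IsPrimitiveRoot ζ m := IsPrimitiveRoot.orderOf ζ
  have hcycl : Polynomial.cyclotomic m ℚ = minpoly ℚ ζ :=
    Polynomial.cyclotomic_eq_minpoly_rat hprim hm1
  have htotdeg : (minpoly ℚ ζ).natDegree = Nat.totient m := by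
    rw [← hcycl, Polynomial.natDegree_cyclotomic]
  have hgen : algebraMap K⟮ζ⟯ Ω (IntermediateField.AdjoinSimple.gen K ζ) = ζ :=
    IntermediateField.AdjoinSimple.algebraMap_gen K ζ
  have hminq : minpoly ℚ (IntermediateField.AdjoinSimple.gen K ζ) = minpoly ℚ ζ := by
    rw [← hgen]
    exact (@minpoly.algebraMap_eq ℚ Ω _ _ _ K⟮ζ⟯ _ _ _ (IsScalarTower.of_algebraMap_eq' (RingHom.ext_rat _ _)) (algebraMap K⟮ζ⟯ Ω).injective _).symm
  have hdeg_dvd : Nat.totient m ∣ Module.finrank ℚ K⟮ζ⟯ := by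
    rw [← htotdeg, ← hminq]
    exact minpoly.degree_dvd (IsIntegral.of_finite ℚ _)
  -- conclude
  rw [← htower] at hdeg_dvd
  have htot2D : Nat.totient m ∣ 2 * Module.finrank ℚ K :=
    hdeg_dvd.trans ((mul_dvd_mul_left _ he2).trans (dvd_of_eq (mul_comm _ 2)))
  have h2n2D : 2 * n ∣ 2 * Module.finrank ℚ K := h2n_tot.trans htot2D
  exact (mul_dvd_mul_iff_left (two_ne_zero)).mp h2n2D
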